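/- arXiv:1801.02309 — 2 statements merged into one kernel-verified Lean document; each statement's English description precedes it below -/
import Mathlib

section
/- Let f : ℝ^d → ℝ be m-strongly convex and L-smooth with minimizer x* and f(x*) = 0, and let Π be the probability measure with density π(x) ∝ e^{−f(x)}. Let μ* be the Gaussian measure N(x*, L^{−1} I_d). Then for every measurable set A, μ*(A) ≤ κ^{d/2} Π(A), where κ = L/m. -/
open MeasureTheory
open scoped RealInnerProductSpace

private lemma gauss_integrable (d : ℕ) {b : ℝ} (hb : 0 < b) :
    Integrable (fun v : EuclideanSpace ℝ (Fin d) => Real.exp (-b * ‖v‖ ^ 2)) := by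
  have h := (GaussianFourier.integrable_cexp_neg_mul_sq_norm_add (b := (b : ℂ))
    (by simpa using hb) 0 (0 : EuclideanSpace ℝ (Fin d))).norm
  refine h.congr (Filter.Eventually.of_forall fun v => ?_)
  simp [Complex.norm_exp, ← Complex.ofReal_pow]

private lemma gauss_integral (d : ℕ) {b : ℝ} (hb : 0 < b) (xs : EuclideanSpace ℝ (Fin d)) :
    ∫ v : EuclideanSpace ℝ (Fin d), Real.exp (-b * ‖v - xs‖ ^ 2)
      = (Real.pi / b) ^ ((d : ℝ) / 2) := by
  rw [integral_sub_right_eq_self (fun v : EuclideanSpace ℝ (Fin d) => Real.exp (-b * ‖v‖ ^ 2)) xs,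
    GaussianFourier.integral_rexp_neg_mul_sq_norm hb, finrank_euclideanSpace_fin]

/-- If `f` is `m`-strongly convex and `L`-smooth with minimizer `x*`, `f(x*) = 0`,
`Π` has density `∝ e^{-f}` and `μ* = N(x*, L⁻¹ I_d)`, then `μ*(A) ≤ κ^{d/2} Π(A)` for every
measurable `A`, where `κ = L/m`. -/
theorem feasible_start_warmness (d : ℕ) (f : EuclideanSpace ℝ (Fin d) → ℝ)
    (m L : ℝ) (hm : 0 < m) (hmL : m ≤ L)
    (hdiff : Differentiable ℝ f)
    (hsc : ∀ x y : EuclideanSpace ℝ (Fin d),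
      f x + ⟪gradient f x, y - x⟫ + m / 2 * ‖x - y‖ ^ 2 ≤ f y)
    (hsmooth : ∀ x y : EuclideanSpace ℝ (Fin d),
      f y ≤ f x + ⟪gradient f x, y - x⟫ + L / 2 * ‖x - y‖ ^ 2)
    (xs : EuclideanSpace ℝ (Fin d))
    (hmin : ∀ y, f xs ≤ f y) (hfxs : f xs = 0) :
    ∀ A : Set (EuclideanSpace ℝ (Fin d)), MeasurableSet A →
      volume.withDensity (fun x =>
          ENNReal.ofReal ((L / (2 * Real.pi)) ^ ((d : ℝ) / 2)
            * Real.exp (-(L / 2) * ‖x - xs‖ ^ 2))) A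
        ≤ ENNReal.ofReal ((L / m) ^ ((d : ℝ) / 2)) *
          volume.withDensity (fun x =>
            ENNReal.ofReal (Real.exp (-f x)
              / ∫ y : EuclideanSpace ℝ (Fin d), Real.exp (-f y))) A := by
  have hL : 0 < L := lt_of_lt_of_le hm hmL
  have hπ : 0 < Real.pi := Real.pi_pos
  set p : ℝ := (d : ℝ) / 2 with hp
  -- gradient vanishes at the minimizer
  have hgrad : gradient f xs = 0 := by
    have hloc : IsLocalMin f xs := Filter.Eventually.of_forall hmin
    have hfd := hloc.fderiv_eq_zero
    unfold gradient
    rw [hfd]; simp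
  have hup : ∀ y, f y ≤ L / 2 * ‖y - xs‖ ^ 2 := fun y => by
    simpa [hgrad, hfxs, norm_sub_rev xs y] using hsmooth xs y
  have hlo : ∀ y, m / 2 * ‖y - xs‖ ^ 2 ≤ f y := fun y => by
    simpa [hgrad, hfxs, norm_sub_rev xs y] using hsc xs y
  set Z : ℝ := ∫ y : EuclideanSpace ℝ (Fin d), Real.exp (-f y) with hZ
  have hcont : Continuous fun y : EuclideanSpace ℝ (Fin d) => Real.exp (-f y) :=
    Real.continuous_exp.comp hdiff.continuous.neg
  have hintm : Integrable (fun y : EuclideanSpace ℝ (Fin d) =>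
      Real.exp (-(m / 2) * ‖y - xs‖ ^ 2)) :=
    (gauss_integrable d (half_pos hm)).comp_sub_right xs
  have hintL : Integrable (fun y : EuclideanSpace ℝ (Fin d) =>
      Real.exp (-(L / 2) * ‖y - xs‖ ^ 2)) :=
    (gauss_integrable d (half_pos hL)).comp_sub_right xs
  have hintf : Integrable fun y : EuclideanSpace ℝ (Fin d) => Real.exp (-f y) := by
    refine hintm.mono' hcont.aestronglyMeasurable (Filter.Eventually.of_forall fun y => ?_)
    rw [Real.norm_eq_abs, abs_of_pos (Real.exp_pos _)]
    exact Real.exp_le_exp.2 (by nlinarith [hlo y])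
  have hZle : Z ≤ (2 * Real.pi / m) ^ p := by
    have h1 : Z ≤ ∫ y : EuclideanSpace ℝ (Fin d), Real.exp (-(m / 2) * ‖y - xs‖ ^ 2) := by
      refine integral_mono hintf hintm fun y => Real.exp_le_exp.2 (by nlinarith [hlo y])
    have h2 := gauss_integral d (half_pos hm) xs
    rw [h2] at h1
    have : Real.pi / (m / 2) = 2 * Real.pi / m := by field_simp
    rwa [this] at h1
  have hZge : (2 * Real.pi / L) ^ p ≤ Z := by
    have h1 : (∫ y : EuclideanSpace ℝ (Fin d), Real.exp (-(L / 2) * ‖y - xs‖ ^ 2)) ≤ Z := by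
      refine integral_mono hintL hintf fun y => Real.exp_le_exp.2 (by nlinarith [hup y])
    have h2 := gauss_integral d (half_pos hL) xs
    rw [h2] at h1
    have : Real.pi / (L / 2) = 2 * Real.pi / L := by field_simp
    rwa [this] at h1
  have hZpos : 0 < Z :=
    lt_of_lt_of_le (Real.rpow_pos_of_pos (by positivity) p) hZge
  -- constants
  have hcmpos : (0 : ℝ) < (2 * Real.pi / m) ^ p := Real.rpow_pos_of_pos (by positivity) p
  have hc : (L / (2 * Real.pi)) ^ p * (2 * Real.pi / m) ^ p = (L / m) ^ p := by
    rw [← Real.mul_rpow (by positivity) (by positivity)]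
    congr 1
    field_simp
  -- pointwise density bound
  have hpt : ∀ x : EuclideanSpace ℝ (Fin d),
      (L / (2 * Real.pi)) ^ p * Real.exp (-(L / 2) * ‖x - xs‖ ^ 2)
        ≤ (L / m) ^ p * (Real.exp (-f x) / Z) := by
    intro x
    have h1 : Real.exp (-(L / 2) * ‖x - xs‖ ^ 2) ≤ Real.exp (-f x) :=
      Real.exp_le_exp.2 (by nlinarith [hup x])
    have h2 : Real.exp (-f x) / (2 * Real.pi / m) ^ p ≤ Real.exp (-f x) / Z := by
      gcongr
    calc (L / (2 * Real.pi)) ^ p * Real.exp (-(L / 2) * ‖x - xs‖ ^ 2)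
        ≤ (L / (2 * Real.pi)) ^ p * Real.exp (-f x) := by
          have : (0:ℝ) ≤ (L / (2 * Real.pi)) ^ p := (Real.rpow_pos_of_pos (by positivity) p).le
          nlinarith
      _ = (L / m) ^ p * (Real.exp (-f x) / (2 * Real.pi / m) ^ p) := by
          rw [← hc]; field_simp
      _ ≤ (L / m) ^ p * (Real.exp (-f x) / Z) := by
          have : (0:ℝ) ≤ (L / m) ^ p := (Real.rpow_pos_of_pos (by positivity) p).le
          nlinarith
  intro A hA
  have hmeas : Measurable fun x : EuclideanSpace ℝ (Fin d) =>
      ENNReal.ofReal (Real.exp (-f x) / Z) :=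
    ((hcont.div_const Z).measurable).ennreal_ofReal
  rw [withDensity_apply _ hA, withDensity_apply _ hA, ← lintegral_const_mul _ hmeas]
  refine lintegral_mono fun x => ?_
  rw [← ENNReal.ofReal_mul (Real.rpow_pos_of_pos (by positivity) p).le]
  exact ENNReal.ofReal_le_ofReal (hpt x)
end

section
/- Let f : ℝ^d → ℝ be m-strongly convex and L-smooth, and let π ∝ e^{−f}. For the MALA proposal density p_x(z) ∝ exp(−‖z − x + h∇f(x)‖²/(4h)), the acceptance ratio satisfies, for all x, z ∈ ℝ^d: (π(z)p_z(x)) / (π(x)p_x(z)) ≥ exp( −(1/4)(L − m)‖x − z‖² − (h/4)(2L‖x−z‖‖∇f(x)‖ + L²‖x−z‖²) ). -/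
open MeasureTheory
open scoped RealInnerProductSpace

set_option maxHeartbeats 2000000

/-- For `f` `m`-strongly convex and `L`-smooth, `π ∝ e^{-f}` and the MALA
proposal density `p_x(z) ∝ exp(-‖z - x + h∇f(x)‖²/(4h))`, the acceptance ratio satisfies
`(π(z) p_z(x)) / (π(x) p_x(z))
  ≥ exp(-(1/4)(L - m)‖x - z‖² - (h/4)(2L‖x - z‖‖∇f(x)‖ + L²‖x - z‖²))`. -/
theorem mala_accept_ratio_lower_bound (d : ℕ) (f : EuclideanSpace ℝ (Fin d) → ℝ)
    (m L h : ℝ) (hm : 0 < m) (hmL : m ≤ L) (hh : 0 < h)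
    (hdiff : Differentiable ℝ f)
    (hsc : ∀ x y : EuclideanSpace ℝ (Fin d),
      f x + ⟪gradient f x, y - x⟫ + m / 2 * ‖x - y‖ ^ 2 ≤ f y)
    (hsmooth : ∀ x y : EuclideanSpace ℝ (Fin d),
      f y ≤ f x + ⟪gradient f x, y - x⟫ + L / 2 * ‖x - y‖ ^ 2) :
    ∀ x z : EuclideanSpace ℝ (Fin d),
      ((Real.exp (-f z) / ∫ y : EuclideanSpace ℝ (Fin d), Real.exp (-f y)) *
            ((4 * Real.pi * h) ^ (-(d : ℝ) / 2) *
              Real.exp (-‖x - (z - h • gradient f z)‖ ^ 2 / (4 * h)))) /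
          ((Real.exp (-f x) / ∫ y : EuclideanSpace ℝ (Fin d), Real.exp (-f y)) *
            ((4 * Real.pi * h) ^ (-(d : ℝ) / 2) *
              Real.exp (-‖z - (x - h • gradient f x)‖ ^ 2 / (4 * h))))
        ≥ Real.exp (-(1 / 4) * (L - m) * ‖x - z‖ ^ 2
            - h / 4 * (2 * L * ‖x - z‖ * ‖gradient f x‖ + L ^ 2 * ‖x - z‖ ^ 2)) := by
  intro x z
  have hL : (0:ℝ) < L := lt_of_lt_of_le hm hmL
  -- positivity of the normalizing constant
  have hJ : 0 < ∫ y : EuclideanSpace ℝ (Fin d), Real.exp (-f y) := by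
    have hcont : Continuous fun y => Real.exp (-f y) :=
      (Real.continuous_exp.comp (hdiff.continuous.neg))
    set c : ℝ := -f 0 + ‖gradient f 0‖ ^ 2 / m with hc
    have hgauss : Integrable (fun v : EuclideanSpace ℝ (Fin d) =>
        Real.exp (-(m/4) * ‖v‖ ^ 2)) := by
      have h := (GaussianFourier.integrable_cexp_neg_mul_sq_norm_add
        (V := EuclideanSpace ℝ (Fin d)) (b := ((m/4 : ℝ) : ℂ))
        (by simpa using by positivity) 0 0).norm
      simpa [Complex.norm_exp, ← Complex.ofReal_pow, Complex.ofReal_re] using h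
    have hint : Integrable (fun y : EuclideanSpace ℝ (Fin d) => Real.exp (-f y)) := by
      refine Integrable.mono (hgauss.const_mul (Real.exp c)) hcont.aestronglyMeasurable
        (Filter.Eventually.of_forall fun y => ?_)
      have h0 := hsc 0 y
      have hip : -⟪gradient f 0, y - 0⟫ ≤ ‖gradient f 0‖ * ‖y‖ := by
        have := abs_real_inner_le_norm (gradient f 0) (y - 0)
        simp only [sub_zero] at this ⊢
        calc -⟪gradient f 0, y⟫ ≤ |⟪gradient f 0, y⟫| := neg_le_abs _
          _ ≤ ‖gradient f 0‖ * ‖y‖ := this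
      have hnn : ‖(0:EuclideanSpace ℝ (Fin d)) - y‖ = ‖y‖ := by simp
      rw [hnn] at h0
      have hbd : -f y ≤ c + -(m/4) * ‖y‖ ^ 2 := by
        have hab : ‖gradient f 0‖ * ‖y‖ ≤ ‖gradient f 0‖ ^ 2 / m + m / 4 * ‖y‖ ^ 2 := by
          have h' : ‖gradient f 0‖ ^ 2 / m * m = ‖gradient f 0‖ ^ 2 :=
            div_mul_cancel₀ _ hm.ne'
          nlinarith [sq_nonneg (‖gradient f 0‖ - m / 2 * ‖y‖), hm, h']
        linarith [h0, hip, hab]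
      rw [Real.norm_eq_abs, abs_of_pos (Real.exp_pos _), Real.norm_eq_abs,
        abs_of_pos (by positivity : (0:ℝ) < Real.exp c * Real.exp (-(m/4) * ‖y‖ ^ 2)),
        ← Real.exp_add]
      exact Real.exp_le_exp.mpr hbd
    rw [MeasureTheory.integral_pos_iff_support_of_nonneg
      (fun y => (Real.exp_pos _).le) hint]
    have hs : Function.support (fun y : EuclideanSpace ℝ (Fin d) => Real.exp (-f y))
        = Set.univ := by
      ext y; simp [Real.exp_ne_zero]
    rw [hs]
    exact IsOpen.measure_pos volume isOpen_univ Set.univ_nonempty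
  set gx := gradient f x with hgx
  set gz := gradient f z with hgz
  -- gradient Lipschitz bound
  have hLip : ‖gz - gx‖ ≤ L * ‖x - z‖ := by
    set w : EuclideanSpace ℝ (Fin d) := z - L⁻¹ • (gz - gx) with hw
    have hw1 := hsmooth z w
    have hw2 := hsc x w
    have hw3 := hsmooth x z
    set G := ‖gz - gx‖ with hG
    set N := ‖x - z‖ with hN
    have e1 : w - z = -(L⁻¹ • (gz - gx)) := by rw [hw]; abel
    have e2 : z - w = L⁻¹ • (gz - gx) := by rw [hw]; abel
    have e3 : w - x = (z - x) - L⁻¹ • (gz - gx) := by rw [hw]; abel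
    have i1 : ⟪gradient f z, w - z⟫ = -(L⁻¹ * ⟪gz, gz - gx⟫) := by
      rw [e1, inner_neg_right, real_inner_smul_right]
    have i2 : ‖z - w‖ ^ 2 = L⁻¹ ^ 2 * G ^ 2 := by
      rw [e2, norm_smul, Real.norm_eq_abs, abs_of_pos (by positivity), mul_pow]
    have i3 : ⟪gradient f x, w - x⟫ = ⟪gx, z - x⟫ - L⁻¹ * ⟪gx, gz - gx⟫ := by
      rw [e3, inner_sub_right, real_inner_smul_right]
    rw [i1, i2] at hw1
    rw [i3] at hw2
    have ha : ⟪gz, gz - gx⟫ - ⟪gx, gz - gx⟫ = G ^ 2 := by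
      rw [← inner_sub_left, hG, real_inner_self_eq_norm_sq]
    have hd : L⁻¹ * ⟪gz, gz - gx⟫ - L⁻¹ * ⟪gx, gz - gx⟫ = L⁻¹ * G ^ 2 := by
      rw [← mul_sub, ha]
    have hq : L / 2 * (L⁻¹ ^ 2 * G ^ 2) = (L⁻¹ * G ^ 2) / 2 := by
      field_simp
    have hX : (0:ℝ) ≤ m / 2 * ‖x - w‖ ^ 2 := by positivity
    rw [hq] at hw1
    have k1 : L⁻¹ * G ^ 2 ≤ L * N ^ 2 := by linarith
    have k2 : G ^ 2 ≤ (L * N) ^ 2 := by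
      have := mul_le_mul_of_nonneg_left k1 hL.le
      have hg2 : L * (L⁻¹ * G ^ 2) = G ^ 2 := by field_simp
      nlinarith
    nlinarith [k2, norm_nonneg (gz - gx), mul_nonneg hL.le (norm_nonneg (x - z))]
  -- abbreviations
  set J := ∫ y : EuclideanSpace ℝ (Fin d), Real.exp (-f y) with hJdef
  set C := (4 * Real.pi * h) ^ (-(d : ℝ) / 2) with hCdef
  have hC : 0 < C := Real.rpow_pos_of_pos (by positivity) _
  set a : ℝ := -‖x - (z - h • gz)‖ ^ 2 / (4 * h) with hadef
  set b : ℝ := -‖z - (x - h • gx)‖ ^ 2 / (4 * h) with hbdef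
  -- the ratio equals an exponential
  have heq : (Real.exp (-f z) / J * (C * Real.exp a)) /
      (Real.exp (-f x) / J * (C * Real.exp b))
      = Real.exp ((-f z + a) - (-f x + b)) := by
    rw [Real.exp_sub, Real.exp_add, Real.exp_add]
    field_simp
  rw [ge_iff_le, heq]
  apply Real.exp_le_exp.mpr
  -- norm expansions
  have e1 : x - (z - h • gz) = (x - z) + h • gz := by abel
  have e2 : z - (x - h • gx) = h • gx - (x - z) := by abel
  have n1 : ‖x - (z - h • gz)‖ ^ 2
      = ‖x - z‖ ^ 2 + 2 * (h * ⟪x - z, gz⟫) + h ^ 2 * ‖gz‖ ^ 2 := by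
    rw [e1, norm_add_sq_real, real_inner_smul_right, norm_smul, Real.norm_eq_abs,
      abs_of_pos hh, mul_pow]
  have n2 : ‖z - (x - h • gx)‖ ^ 2
      = ‖x - z‖ ^ 2 - 2 * (h * ⟪x - z, gx⟫) + h ^ 2 * ‖gx‖ ^ 2 := by
    rw [e2, norm_sub_rev, norm_sub_sq_real, real_inner_smul_right, norm_smul,
      Real.norm_eq_abs, abs_of_pos hh, mul_pow]
  -- facts
  have hA : f z ≤ f x + -⟪x - z, gx⟫ + L / 2 * ‖x - z‖ ^ 2 := by
    have := hsmooth x z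
    have hi : ⟪gradient f x, z - x⟫ = -⟪x - z, gx⟫ := by
      rw [real_inner_comm, show z - x = -(x - z) from by abel, inner_neg_left]
    rwa [hi] at this
  have hB : f z + ⟪x - z, gz⟫ + m / 2 * ‖x - z‖ ^ 2 ≤ f x := by
    have := hsc z x
    have hi : ⟪gradient f z, x - z⟫ = ⟪x - z, gz⟫ := by rw [real_inner_comm]
    rwa [hi, norm_sub_rev] at this
  have h3 : ‖gz‖ ≤ ‖gx‖ + L * ‖x - z‖ := by
    calc ‖gz‖ = ‖gx + (gz - gx)‖ := by rw [add_sub_cancel]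
      _ ≤ ‖gx‖ + ‖gz - gx‖ := norm_add_le _ _
      _ ≤ ‖gx‖ + L * ‖x - z‖ := by linarith
  have h4 : ‖gz‖ ^ 2 ≤ ‖gx‖ ^ 2 + 2 * L * ‖x - z‖ * ‖gx‖ + L ^ 2 * ‖x - z‖ ^ 2 := by
    nlinarith [h3, norm_nonneg gz, norm_nonneg gx, norm_nonneg (x - z), hL.le]
  -- exponent computation
  have hab : a - b = -(⟪x - z, gx⟫ / 2) - ⟪x - z, gz⟫ / 2
      + h / 4 * (‖gx‖ ^ 2 - ‖gz‖ ^ 2) := by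
    rw [hadef, hbdef, n1, n2]
    field_simp
    ring
  have h5 : h / 4 * (‖gx‖ ^ 2 - ‖gz‖ ^ 2)
      ≥ -(h / 4) * (2 * L * ‖x - z‖ * ‖gx‖ + L ^ 2 * ‖x - z‖ ^ 2) := by
    nlinarith [mul_nonneg hh.le (sub_nonneg.2 h4)]
  have hfinal := hab
  nlinarith [hA, hB, h5, hab]
end
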